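/- For integers 2 ≤ a ≤ b, (b!/(a-1)!)^{1/(b-a+1)} > b·e^{−27/26}, and in particular (b!/(a-1)!)^{1/(b-a+1)} > b/3. -/
import Mathlib

open Real

lemma aux_pow_succ_le (b : ℕ) (hb : 1 ≤ b) :
    ((b : ℝ) + 1) ^ b ≤ (b : ℝ) ^ b * Real.exp 1 := by
  have hb0 : (0:ℝ) < b := by exact_mod_cast hb
  have h1 : ((b:ℝ) + 1) = b * (1 + 1 / b) := by field_simp
  have h2 : (1 + 1 / (b:ℝ)) ≤ Real.exp (1 / b) := by
    have := Real.add_one_le_exp (1 / (b:ℝ)); linarith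
  calc ((b:ℝ)+1)^b = (b:ℝ)^b * (1 + 1/(b:ℝ))^b := by rw [h1, mul_pow]
    _ ≤ (b:ℝ)^b * Real.exp (1/(b:ℝ)) ^ b := by gcongr
    _ = (b:ℝ)^b * Real.exp 1 := by
        rw [← Real.exp_nat_mul]
        congr 1
        field_simp

lemma aux_fact_lower (m : ℕ) (hm : 1 ≤ m) : ∀ b, m ≤ b →
    (m.factorial : ℝ) * (b:ℝ) ^ b ≤ (b.factorial : ℝ) * (m:ℝ) ^ m * Real.exp 1 ^ (b - m) := by
  intro b hb
  induction b, hb using Nat.le_induction with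
  | base => simp
  | succ b hb ih =>
    have hb1 : 1 ≤ b := le_trans hm hb
    have key := aux_pow_succ_le b hb1
    have h : (b + 1) - m = (b - m) + 1 := by omega
    rw [h]
    have hfac : ((b+1).factorial : ℝ) = ((b:ℝ)+1) * (b.factorial : ℝ) := by
      rw [Nat.factorial_succ]; push_cast; ring
    have hc : ((b+1 : ℕ) : ℝ) = (b:ℝ) + 1 := by push_cast; ring
    rw [hfac, hc]
    calc (m.factorial:ℝ) * ((b:ℝ)+1)^(b+1)
        = ((b:ℝ)+1) * ((m.factorial:ℝ) * ((b:ℝ)+1)^b) := by ring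
      _ ≤ ((b:ℝ)+1) * ((m.factorial:ℝ) * ((b:ℝ)^b * Real.exp 1)) := by
          have hbp : (0:ℝ) ≤ (b:ℝ) + 1 := by positivity
          have hf : (0:ℝ) ≤ (m.factorial:ℝ) := by positivity
          exact mul_le_mul_of_nonneg_left (mul_le_mul_of_nonneg_left key hf) hbp
      _ = ((m.factorial:ℝ) * (b:ℝ)^b) * (((b:ℝ)+1) * Real.exp 1) := by ring
      _ ≤ ((b.factorial:ℝ) * (m:ℝ)^m * Real.exp 1 ^ (b-m)) * (((b:ℝ)+1) * Real.exp 1) := by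
          have : (0:ℝ) ≤ ((b:ℝ)+1) * Real.exp 1 := by positivity
          exact mul_le_mul_of_nonneg_right ih this
      _ = ((b:ℝ)+1) * (b.factorial:ℝ) * (m:ℝ)^m * Real.exp 1 ^ ((b-m)+1) := by ring

lemma aux_exp_lt3 : Real.exp (27/26) < 3 := by
  have h1 : Real.exp 1 < 2.7182818286 := Real.exp_one_lt_d9
  have h2 : Real.exp (27/26) ^ 26 = Real.exp 1 ^ 27 := by
    rw [← Real.exp_nat_mul, ← Real.exp_nat_mul]; norm_num
  have h3 : Real.exp 1 ^ 27 < 2.7182818286 ^ 27 :=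
    pow_lt_pow_left₀ h1 (Real.exp_pos 1).le (by norm_num)
  have h4 : (2.7182818286 : ℝ) ^ 27 < 3 ^ 26 := by norm_num
  have h5 : Real.exp (27/26) ^ 26 < 3 ^ 26 := by
    rw [h2]; linarith
  exact lt_of_pow_lt_pow_left₀ 26 (by norm_num) h5

theorem stmt_1 (a b : ℕ) (ha : 2 ≤ a) (hab : a ≤ b) :
    ((b.factorial : ℝ) / ((a - 1).factorial : ℝ)) ^ (1 / ((b : ℝ) - a + 1)) >
        (b : ℝ) * Real.exp (-(27 / 26)) ∧
      ((b.factorial : ℝ) / ((a - 1).factorial : ℝ)) ^ (1 / ((b : ℝ) - a + 1)) > (b : ℝ) / 3 := by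
  set m := a - 1 with hm_def
  have hm1 : 1 ≤ m := by omega
  have hmb : m ≤ b := by omega
  set n := b - m with hn_def
  have hn1 : 1 ≤ n := by omega
  have hb0 : (0:ℝ) < b := by
    have : 2 ≤ b := le_trans ha hab
    exact_mod_cast lt_of_lt_of_le (by norm_num) this
  have hmcast : (m:ℝ) = (a:ℝ) - 1 := by
    have : (m:ℝ) = ((a:ℕ):ℝ) - ((1:ℕ):ℝ) := by
      rw [hm_def, Nat.cast_sub (by omega)]
    simpa using this
  have hncast : (n:ℝ) = (b:ℝ) - (a:ℝ) + 1 := by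
    have : (n:ℝ) = ((b:ℕ):ℝ) - ((m:ℕ):ℝ) := by
      rw [hn_def, Nat.cast_sub hmb]
    rw [this, hmcast]; ring
  have hexp : 1 / ((b:ℝ) - a + 1) = 1 / (n:ℝ) := by rw [hncast]
  have hfm : (0:ℝ) < (m.factorial : ℝ) := by exact_mod_cast Nat.factorial_pos m
  -- lower bound on the quotient of factorials
  have hmn : m + n = b := by omega
  have hmR : (0:ℝ) < m := by exact_mod_cast hm1
  have hkey : ((b:ℝ) * Real.exp (-1)) ^ n ≤ (b.factorial : ℝ) / (m.factorial : ℝ) := by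
    have h1 := aux_fact_lower m hm1 b hmb
    rw [← hn_def] at h1
    have hbm : (m:ℝ) ^ m ≤ (b:ℝ) ^ m := by
      gcongr
    have h2 : (m.factorial : ℝ) * (b:ℝ) ^ b ≤ (b.factorial : ℝ) * (b:ℝ) ^ m * Real.exp 1 ^ n := by
      calc (m.factorial : ℝ) * (b:ℝ) ^ b
          ≤ (b.factorial : ℝ) * (m:ℝ) ^ m * Real.exp 1 ^ n := h1
        _ ≤ (b.factorial : ℝ) * (b:ℝ) ^ m * Real.exp 1 ^ n := by
            gcongr
    have hbb : (b:ℝ) ^ b = (b:ℝ) ^ m * (b:ℝ) ^ n := by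
      rw [← pow_add, hmn]
    rw [hbb] at h2
    have hbn : (m.factorial : ℝ) * (b:ℝ) ^ n ≤ (b.factorial : ℝ) * Real.exp 1 ^ n := by
      have hbmp : (0:ℝ) < (b:ℝ) ^ m := by positivity
      have hep : (0:ℝ) < Real.exp 1 ^ n := by positivity
      have hfb : (0:ℝ) < (b.factorial:ℝ) := by exact_mod_cast Nat.factorial_pos b
      nlinarith
    rw [mul_pow, ← Real.exp_nat_mul, le_div_iff₀ hfm]
    have hone : Real.exp ((n:ℝ) * (-1)) * Real.exp 1 ^ n = 1 := by
      rw [← Real.exp_nat_mul, ← Real.exp_add]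
      have : (n:ℝ) * (-1) + (n:ℝ) * 1 = 0 := by ring
      rw [this, Real.exp_zero]
    calc (b:ℝ) ^ n * Real.exp ((n:ℝ) * (-1)) * (m.factorial:ℝ)
        = ((m.factorial:ℝ) * (b:ℝ)^n) * Real.exp ((n:ℝ)*(-1)) := by ring
      _ ≤ ((b.factorial:ℝ) * Real.exp 1 ^ n) * Real.exp ((n:ℝ)*(-1)) := by
          exact mul_le_mul_of_nonneg_right hbn (Real.exp_pos _).le
      _ = (b.factorial:ℝ) * (Real.exp ((n:ℝ)*(-1)) * Real.exp 1 ^ n) := by ring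
      _ = (b.factorial:ℝ) := by rw [hone]; ring
  have hstrict : ((b:ℝ) * Real.exp (-(27/26))) ^ n < (b.factorial : ℝ) / (m.factorial : ℝ) := by
    refine lt_of_lt_of_le ?_ hkey
    have : Real.exp (-(27/26)) < Real.exp (-1) := by
      apply Real.exp_lt_exp.mpr; norm_num
    apply pow_lt_pow_left₀ _ (by positivity) (by omega)
    · exact mul_lt_mul_of_pos_left this hb0
  -- take n-th roots via rpow
  have hcpos : (0:ℝ) < (b:ℝ) * Real.exp (-(27/26)) := by positivity
  have hnR : (0:ℝ) < (n:ℝ) := by exact_mod_cast hn1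
  have hmain : (b:ℝ) * Real.exp (-(27/26)) <
      ((b.factorial : ℝ) / (m.factorial : ℝ)) ^ (1 / (n:ℝ)) := by
    have h1 : (((b:ℝ) * Real.exp (-(27/26))) ^ n) ^ (1 / (n:ℝ)) <
        ((b.factorial : ℝ) / (m.factorial : ℝ)) ^ (1 / (n:ℝ)) := by
      apply Real.rpow_lt_rpow (by positivity) hstrict (by positivity)
    have h2 : (((b:ℝ) * Real.exp (-(27/26))) ^ n) ^ (1 / (n:ℝ)) =
        (b:ℝ) * Real.exp (-(27/26)) := by
      rw [← Real.rpow_natCast ((b:ℝ) * Real.exp (-(27/26))) n,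
        ← Real.rpow_mul hcpos.le]
      rw [mul_one_div, div_self (ne_of_gt hnR), Real.rpow_one]
    rwa [h2] at h1
  rw [hexp]
  have h3 : (b:ℝ) / 3 < (b:ℝ) * Real.exp (-(27/26)) := by
    have : (1:ℝ)/3 < Real.exp (-(27/26)) := by
      rw [Real.exp_neg]
      have h := aux_exp_lt3
      have hp := Real.exp_pos (27/26 : ℝ)
      have hinv : (Real.exp (27/26))⁻¹ * Real.exp (27/26) = 1 := inv_mul_cancel₀ hp.ne'
      nlinarith
    calc (b:ℝ)/3 = (b:ℝ) * (1/3) := by ring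
      _ < (b:ℝ) * Real.exp (-(27/26)) := by
          exact mul_lt_mul_of_pos_left this hb0
  exact ⟨hmain, lt_trans h3 hmain⟩
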